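/- Let (λ_k)_{k≥1} be a strictly increasing sequence of positive real numbers and let λ ∈ ℂ with λ ≠ λ_k for all k. Assume C := sup_{k≥1} max(|λ|, λ_k) / |λ - λ_k| < ∞. Then ∑_{k=1}^∞ | λ/(λ - λ_{k+1}) - λ/(λ - λ_k) | ≤ 4 C². -/

import Mathlib

/-- Let `(λ_k)` be a strictly increasing sequence of positive reals and `λ ∈ ℂ` with
`λ ≠ λ_k` for all `k`. If `C` bounds `max(|λ|, λ_k)/|λ - λ_k|` for all `k`, then the
telescoping resolvent series `∑_k |λ/(λ-λ_{k+1}) - λ/(λ-λ_k)|` converges and is `≤ 4C²`. -/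
theorem telescoping_resolvent_sum (lam : ℕ → ℝ) (hmono : StrictMono lam)
    (hpos : ∀ k, 0 < lam k) (z : ℂ) (hz : ∀ k, z ≠ (lam k : ℂ)) (C : ℝ)
    (hC : ∀ k, max ‖z‖ (lam k) / ‖z - (lam k : ℂ)‖ ≤ C) :
    Summable (fun k => ‖z / (z - (lam (k + 1) : ℂ)) - z / (z - (lam k : ℂ))‖) ∧
      ∑' k, ‖z / (z - (lam (k + 1) : ℂ)) - z / (z - (lam k : ℂ))‖ ≤ 4 * C ^ 2 := by
  have hd : ∀ k, (0:ℝ) < ‖z - (lam k : ℂ)‖ := fun k =>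
    norm_pos_iff.mpr (sub_ne_zero.mpr (hz k))
  have hC0 : 0 < C :=
    lt_of_lt_of_le (div_pos (lt_of_lt_of_le (hpos 0) (le_max_right _ _)) (hd 0)) (hC 0)
  have hzle : ∀ k, ‖z‖ ≤ C * ‖z - (lam k : ℂ)‖ := fun k =>
    le_trans (le_max_left _ _) ((div_le_iff₀ (hd k)).mp (hC k))
  have hlle : ∀ k, lam k ≤ C * ‖z - (lam k : ℂ)‖ := fun k =>
    le_trans (le_max_right _ _) ((div_le_iff₀ (hd k)).mp (hC k))
  by_cases hz0 : z = 0
  · subst hz0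
    simp only [zero_div, sub_self, norm_zero]
    exact ⟨summable_zero, by rw [tsum_zero]; positivity⟩
  have hn : (0:ℝ) < ‖z‖ := norm_pos_iff.mpr hz0
  have hne : ‖z‖ ≠ 0 := by exact hn.ne'
  -- the formula for each term
  have hrw : ∀ k, ‖z / (z - (lam (k + 1) : ℂ)) - z / (z - (lam k : ℂ))‖
      = ‖z‖ * (lam (k+1) - lam k) / (‖z - (lam (k+1) : ℂ)‖ * ‖z - (lam k : ℂ)‖) := by
    intro k
    have ha : z - (lam (k+1) : ℂ) ≠ 0 := sub_ne_zero.mpr (hz (k+1))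
    have hb : z - (lam k : ℂ) ≠ 0 := sub_ne_zero.mpr (hz k)
    have e : z / (z - (lam (k+1) : ℂ)) - z / (z - (lam k : ℂ))
        = z * (((lam (k+1) - lam k : ℝ)) : ℂ) / ((z - (lam (k+1) : ℂ)) * (z - (lam k : ℂ))) := by
      field_simp
      -- push_cast not needed
      push_cast; ring
    rw [e, norm_div, norm_mul, norm_mul, Complex.norm_real, Real.norm_eq_abs,
      abs_of_pos (sub_pos.mpr (hmono (Nat.lt_succ_self k)))]
  -- the three telescoping majorants
  set F1 : ℕ → ℝ := fun k => min (lam k) (2 * ‖z‖) with hF1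
  set F2 : ℕ → ℝ := fun k => if lam k ≤ 2 * ‖z‖ then (1:ℝ) else 0 with hF2
  set F3 : ℕ → ℝ := fun k => min (1 / lam k) (1 / (2 * ‖z‖)) with hF3
  have hF1mono : ∀ k, F1 k ≤ F1 (k+1) := fun k =>
    min_le_min (hmono (Nat.lt_succ_self k)).le le_rfl
  have hF2mono : ∀ k, F2 (k+1) ≤ F2 k := by
    intro k
    simp only [hF2]
    split_ifs with h1 h2 <;> try norm_num
    exact absurd (le_trans (hmono (Nat.lt_succ_self k)).le h1) h2
  have hF3mono : ∀ k, F3 (k+1) ≤ F3 k := fun k =>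
    min_le_min (one_div_le_one_div_of_le (hpos k) (hmono (Nat.lt_succ_self k)).le) le_rfl
  -- the pointwise bound
  have hfB : ∀ k, ‖z / (z - (lam (k + 1) : ℂ)) - z / (z - (lam k : ℂ))‖
      ≤ C^2/‖z‖ * (F1 (k+1) - F1 k) + C^2 * (F2 k - F2 (k+1)) + C^2 * ‖z‖ * (F3 k - F3 (k+1)) := by
    intro k
    rw [hrw k]
    have hda := hd (k+1)
    have hdb := hd k
    have hab : lam k < lam (k+1) := hmono (Nat.lt_succ_self k)
    rcases le_or_gt (lam (k+1)) (2 * ‖z‖) with h1 | h1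
    · -- small case
      have e1 : F1 (k+1) - F1 k = lam (k+1) - lam k := by
        simp only [hF1]
        rw [min_eq_left h1, min_eq_left (le_trans hab.le h1)]
      have e2 : 0 ≤ F2 k - F2 (k+1) := sub_nonneg.mpr (hF2mono k)
      have e3 : 0 ≤ F3 k - F3 (k+1) := sub_nonneg.mpr (hF3mono k)
      have m : ‖z‖ * (lam (k+1) - lam k) / (‖z - (lam (k+1) : ℂ)‖ * ‖z - (lam k : ℂ)‖)
          ≤ C^2/‖z‖ * (lam (k+1) - lam k) := by
        rw [div_le_iff₀ (by positivity), div_mul_eq_mul_div, div_mul_eq_mul_div, le_div_iff₀ hn]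
        nlinarith [mul_le_mul (hzle (k+1)) (hzle k) (norm_nonneg z) (by positivity : (0:ℝ) ≤ C * ‖z - (lam (k+1) : ℂ)‖), sub_nonneg.mpr hab.le]
      rw [e1]
      nlinarith [mul_nonneg (sq_nonneg C) e2, mul_nonneg (mul_nonneg (sq_nonneg C) hn.le) e3]
    rcases le_or_gt (lam k) (2 * ‖z‖) with h2 | h2
    · -- crossing case
      have e1 : 0 ≤ F1 (k+1) - F1 k := sub_nonneg.mpr (hF1mono k)
      have e2 : F2 k - F2 (k+1) = 1 := by
        simp only [hF2, if_pos h2, if_neg (not_le.mpr h1)]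
        norm_num
      have e3 : 0 ≤ F3 k - F3 (k+1) := sub_nonneg.mpr (hF3mono k)
      have m : ‖z‖ * (lam (k+1) - lam k) / (‖z - (lam (k+1) : ℂ)‖ * ‖z - (lam k : ℂ)‖)
          ≤ C^2 := by
        rw [div_le_iff₀ (by positivity)]
        have hub : lam (k+1) - lam k ≤ C * ‖z - (lam (k+1) : ℂ)‖ :=
          le_trans (sub_le_self _ (hpos k).le) (hlle (k+1))
        nlinarith [mul_le_mul (hzle k) hub (sub_nonneg.mpr hab.le) (by positivity : (0:ℝ) ≤ C * ‖z - (lam k : ℂ)‖)]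
      rw [e2]
      nlinarith [mul_nonneg (div_nonneg (sq_nonneg C) hn.le) e1, mul_nonneg (mul_nonneg (sq_nonneg C) hn.le) e3]
    · -- large case
      have e1 : 0 ≤ F1 (k+1) - F1 k := sub_nonneg.mpr (hF1mono k)
      have e2 : 0 ≤ F2 k - F2 (k+1) := sub_nonneg.mpr (hF2mono k)
      have e3 : F3 k - F3 (k+1) = 1 / lam k - 1 / lam (k+1) := by
        simp only [hF3]
        rw [min_eq_left (one_div_le_one_div_of_le (by positivity) h2.le),
          min_eq_left (one_div_le_one_div_of_le (by positivity) (h2.trans hab).le)]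
      have m : ‖z‖ * (lam (k+1) - lam k) / (‖z - (lam (k+1) : ℂ)‖ * ‖z - (lam k : ℂ)‖)
          ≤ C^2 * ‖z‖ * (1 / lam k - 1 / lam (k+1)) := by
        have ee : 1 / lam k - 1 / lam (k+1) = (lam (k+1) - lam k) / (lam k * lam (k+1)) := by
          rw [div_sub_div _ _ (hpos k).ne' (hpos (k+1)).ne', one_mul, mul_one]
        rw [ee, ← mul_div_assoc, div_le_div_iff₀ (mul_pos hda hdb) (mul_pos (hpos k) (hpos (k+1)))]
        have hp : lam k * lam (k+1) ≤ (C * ‖z - (lam k : ℂ)‖) * (C * ‖z - (lam (k+1) : ℂ)‖) :=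
          mul_le_mul (hlle k) (hlle (k+1)) (hpos (k+1)).le (by positivity)
        nlinarith [mul_le_mul_of_nonneg_left hp
          (mul_nonneg (norm_nonneg z) (sub_nonneg.mpr hab.le))]
      rw [e3]
      nlinarith [mul_nonneg (div_nonneg (sq_nonneg C) hn.le) e1, mul_nonneg (sq_nonneg C) e2]
  -- bounded partial sums
  have key : ∀ N, ∑ k ∈ Finset.range N,
      ‖z / (z - (lam (k + 1) : ℂ)) - z / (z - (lam k : ℂ))‖ ≤ 4 * C ^ 2 := by
    intro N
    calc ∑ k ∈ Finset.range N, ‖z / (z - (lam (k + 1) : ℂ)) - z / (z - (lam k : ℂ))‖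
        ≤ ∑ k ∈ Finset.range N, (C^2/‖z‖ * (F1 (k+1) - F1 k) + C^2 * (F2 k - F2 (k+1))
            + C^2 * ‖z‖ * (F3 k - F3 (k+1))) :=
          Finset.sum_le_sum fun k _ => hfB k
      _ = C^2/‖z‖ * (F1 N - F1 0) + C^2 * (F2 0 - F2 N) + C^2 * ‖z‖ * (F3 0 - F3 N) := by
          rw [Finset.sum_add_distrib, Finset.sum_add_distrib, ← Finset.mul_sum, ← Finset.mul_sum,
            ← Finset.mul_sum, Finset.sum_range_sub, Finset.sum_range_sub', Finset.sum_range_sub']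
      _ ≤ 4 * C ^ 2 := by
          have b1 : C^2/‖z‖ * (F1 N - F1 0) ≤ 2 * C^2 := by
            have h1 : F1 N - F1 0 ≤ 2 * ‖z‖ := by
              have := min_le_right (lam N) (2 * ‖z‖)
              have h0 : (0:ℝ) ≤ F1 0 := le_min (hpos 0).le (by positivity)
              simp only [hF1] at *
              linarith
            calc C^2/‖z‖ * (F1 N - F1 0) ≤ C^2/‖z‖ * (2 * ‖z‖) :=
                  mul_le_mul_of_nonneg_left h1 (by positivity)
              _ = 2 * C^2 := by field_simp [hne]
          have b2 : C^2 * (F2 0 - F2 N) ≤ C^2 := by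
            have h1 : F2 0 - F2 N ≤ 1 := by
              simp only [hF2]; split_ifs <;> norm_num
            nlinarith [sq_nonneg C]
          have b3 : C^2 * ‖z‖ * (F3 0 - F3 N) ≤ C^2 / 2 := by
            have h1 : F3 0 - F3 N ≤ 1 / (2 * ‖z‖) := by
              have ha := min_le_right (1 / lam 0) (1 / (2 * ‖z‖))
              have hb : (0:ℝ) ≤ F3 N := le_min (one_div_nonneg.mpr (hpos N).le) (by positivity)
              simp only [hF3] at *
              linarith
            calc C^2 * ‖z‖ * (F3 0 - F3 N) ≤ C^2 * ‖z‖ * (1 / (2 * ‖z‖)) :=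
                  mul_le_mul_of_nonneg_left h1 (by positivity)
              _ = C^2 / 2 := by field_simp [hne]
          nlinarith [sq_nonneg C]
  have hnn : ∀ k, (0:ℝ) ≤ ‖z / (z - (lam (k + 1) : ℂ)) - z / (z - (lam k : ℂ))‖ :=
    fun k => norm_nonneg _
  have hs : Summable (fun k => ‖z / (z - (lam (k + 1) : ℂ)) - z / (z - (lam k : ℂ))‖) :=
    summable_of_sum_range_le hnn key
  exact ⟨hs, Summable.tsum_le_of_sum_range_le hs key⟩
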